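/- If U ~ Uniform(0,1) and G_T = φ - log(exp(φ - T) - log U), then G_T has the distribution of a Gumbel(φ) random variable conditioned to be at most T; that is, P(G_T ≤ g) = exp(-exp(-(g-φ))) / exp(-exp(-(T-φ))) for all g ≤ T. -/
import Mathlib


open MeasureTheory

/-- Correctness of the truncated Gumbel sampler: if `U ~ Uniform(0,1)` and
`G_T = φ - log(exp(φ - T) - log U)`, then `G_T` is distributed as a `Gumbel(φ)` random
variable conditioned to be at most `T`:
`P(G_T ≤ g) = exp(-exp(-(g-φ))) / exp(-exp(-(T-φ)))` for all `g ≤ T`. -/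
theorem truncated_gumbel_cdf
    {Ω : Type*} [MeasurableSpace Ω] (μ : Measure Ω) [IsProbabilityMeasure μ]
    (U : Ω → ℝ) (hUm : Measurable U)
    (hU : Measure.map U μ = (volume.restrict (Set.Ioo (0:ℝ) 1)))
    (φ T : ℝ) :
    ∀ g : ℝ, g ≤ T →
      μ {ω | φ - Real.log (Real.exp (φ - T) - Real.log (U ω)) ≤ g}
        = ENNReal.ofReal
            (Real.exp (-Real.exp (-(g - φ))) / Real.exp (-Real.exp (-(T - φ)))) := by
  intro g hg
  set c : ℝ := Real.exp (Real.exp (φ - T) - Real.exp (φ - g)) with hc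
  have hc0 : 0 < c := Real.exp_pos _
  have hmono : Real.exp (φ - T) ≤ Real.exp (φ - g) :=
    Real.exp_le_exp.mpr (by linarith)
  have hc1 : c ≤ 1 := by
    rw [hc, ← Real.exp_zero]
    exact Real.exp_le_exp.mpr (by linarith)
  set S : Set ℝ := {u : ℝ | φ - Real.log (Real.exp (φ - T) - Real.log u) ≤ g} with hSdef
  have hS : MeasurableSet S := by
    have hf : Measurable fun u : ℝ => φ - Real.log (Real.exp (φ - T) - Real.log u) :=
      measurable_const.sub ((measurable_const.sub Real.measurable_log).log)
    exact measurableSet_le hf measurable_const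
  have hset : {ω | φ - Real.log (Real.exp (φ - T) - Real.log (U ω)) ≤ g} = U ⁻¹' S := rfl
  rw [hset, ← Measure.map_apply hUm hS, hU, Measure.restrict_apply hS]
  -- characterize membership for u ∈ (0,1)
  have key : ∀ u ∈ Set.Ioo (0:ℝ) 1, u ∈ S ↔ u ≤ c := by
    intro u hu
    have hu0 : 0 < u := hu.1
    have hlogneg : Real.log u < 0 := Real.log_neg hu0 hu.2
    have hA : 0 < Real.exp (φ - T) - Real.log u := by
      have := Real.exp_pos (φ - T); linarith
    constructor
    · intro h
      have h0 : φ - Real.log (Real.exp (φ - T) - Real.log u) ≤ g := h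
      have h1 : φ - g ≤ Real.log (Real.exp (φ - T) - Real.log u) := by linarith
      have h2 : Real.exp (φ - g) ≤ Real.exp (φ - T) - Real.log u :=
        (Real.le_log_iff_exp_le hA).mp h1
      have h3 : Real.log u ≤ Real.exp (φ - T) - Real.exp (φ - g) := by linarith
      calc u = Real.exp (Real.log u) := (Real.exp_log hu0).symm
        _ ≤ c := Real.exp_le_exp.mpr h3
    · intro h
      have h3 : Real.log u ≤ Real.exp (φ - T) - Real.exp (φ - g) :=
        (Real.log_le_iff_le_exp hu0).mpr h
      have h2 : Real.exp (φ - g) ≤ Real.exp (φ - T) - Real.log u := by linarith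
      have h1 : φ - g ≤ Real.log (Real.exp (φ - T) - Real.log u) :=
        (Real.le_log_iff_exp_le hA).mpr h2
      show φ - Real.log (Real.exp (φ - T) - Real.log u) ≤ g
      linarith
  have hval : ENNReal.ofReal
      (Real.exp (-Real.exp (-(g - φ))) / Real.exp (-Real.exp (-(T - φ)))) =
      ENNReal.ofReal c := by
    congr 1
    rw [← Real.exp_sub, hc]
    congr 1
    ring_nf
  rw [hval]
  rcases lt_or_eq_of_le hc1 with hlt | heq
  · have : S ∩ Set.Ioo 0 1 = Set.Ioc 0 c := by
      ext u
      constructor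
      · rintro ⟨huS, hu⟩
        exact ⟨hu.1, (key u hu).mp huS⟩
      · rintro ⟨h0, hle⟩
        have hu : u ∈ Set.Ioo (0:ℝ) 1 := ⟨h0, lt_of_le_of_lt hle hlt⟩
        exact ⟨(key u hu).mpr hle, hu⟩
    rw [this, Real.volume_Ioc, sub_zero]
  · have : S ∩ Set.Ioo 0 1 = Set.Ioo 0 1 := by
      apply Set.inter_eq_right.mpr
      intro u hu
      exact (key u hu).mpr (le_of_lt (heq ▸ hu.2))
    rw [this, Real.volume_Ioo, sub_zero, ← heq]
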